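/- Let A ⊆ {1,...,N} be a B₂ set with |A| = k and m a positive integer. Let a(x) = |{a ∈ A : a ≡ x mod m}|. Then ∑_{x ∈ ZMod m} a(x)² ≤ k + 2·N/m. -/

import Mathlib

private lemma b2_helper (A : Finset ℕ)
    (hB2 : ∀ a ∈ A, ∀ b ∈ A, ∀ c ∈ A, ∀ d ∈ A,
      b ≤ a → d ≤ c → a + b = c + d → a = c ∧ b = d)
    {u v u' v' : ℕ} (hu : u ∈ A) (hv : v ∈ A) (hu' : u' ∈ A) (hv' : v' ∈ A)
    (hvu : v < u) (hv'u' : v' < u') (hlt : u < u') (heq : u + v' = u' + v) : False := by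
  rcases le_or_gt v' u with h2 | h2
  · have := hB2 u' hu' v hv u hu v' hv' (le_of_lt (lt_trans hvu hlt)) h2 (by omega)
    omega
  · have := hB2 u' hu' v hv v' hv' u hu (le_of_lt (lt_trans hvu hlt)) (le_of_lt h2) (by omega)
    omega

private lemma b2_diffs (A : Finset ℕ)
    (hB2 : ∀ a ∈ A, ∀ b ∈ A, ∀ c ∈ A, ∀ d ∈ A,
      b ≤ a → d ≤ c → a + b = c + d → a = c ∧ b = d)
    {u v u' v' : ℕ} (hu : u ∈ A) (hv : v ∈ A) (hu' : u' ∈ A) (hv' : v' ∈ A)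
    (hvu : v < u) (hv'u' : v' < u') (heq : u + v' = u' + v) : u = u' ∧ v = v' := by
  rcases lt_trichotomy u u' with h | h | h
  · exact absurd (b2_helper A hB2 hu hv hu' hv' hvu hv'u' h heq) (fun x => x)
  · omega
  · exact absurd (b2_helper A hB2 hu' hv' hu hv hv'u' hvu h (by omega)) (fun x => x)

theorem stmt_8 (N m : ℕ) [NeZero m] (A : Finset ℕ)
    (hA : A ⊆ Finset.Icc 1 N)
    (hB2 : ∀ a ∈ A, ∀ b ∈ A, ∀ c ∈ A, ∀ d ∈ A,
      b ≤ a → d ≤ c → a + b = c + d → a = c ∧ b = d)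
    (k : ℕ) (hk : A.card = k)
    (a : ZMod m → ℕ)
    (ha : ∀ x : ZMod m, a x = (A.filter (fun n => ((n : ℕ) : ZMod m) = x)).card) :
    (∑ x : ZMod m, (a x : ℝ) ^ 2) ≤ k + 2 * N / m := by
  classical
  have hm : 0 < m := Nat.pos_of_ne_zero (NeZero.ne m)
  set S := (A ×ˢ A).filter (fun p => ((p.1 : ℕ) : ZMod m) = ((p.2 : ℕ) : ZMod m)) with hSdef
  -- Step 1: ∑ (a x)^2 = S.card in ℕ
  have hSeq : S = Finset.univ.biUnion
      (fun x : ZMod m => (A.filter (fun n => ((n : ℕ) : ZMod m) = x)) ×ˢ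
        (A.filter (fun n => ((n : ℕ) : ZMod m) = x))) := by
    ext p
    simp only [hSdef, Finset.mem_filter, Finset.mem_product, Finset.mem_biUnion,
      Finset.mem_univ, true_and]
    constructor
    · rintro ⟨⟨h1, h2⟩, h3⟩
      exact ⟨(p.1 : ZMod m), ⟨h1, rfl⟩, ⟨h2, h3.symm⟩⟩
    · rintro ⟨x, ⟨h1, e1⟩, ⟨h2, e2⟩⟩
      exact ⟨⟨h1, h2⟩, e1.trans e2.symm⟩
  have hdisj : ∀ x ∈ (Finset.univ : Finset (ZMod m)), ∀ y ∈ Finset.univ, x ≠ y →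
      Disjoint ((A.filter (fun n => ((n : ℕ) : ZMod m) = x)) ×ˢ
        (A.filter (fun n => ((n : ℕ) : ZMod m) = x)))
        ((A.filter (fun n => ((n : ℕ) : ZMod m) = y)) ×ˢ
        (A.filter (fun n => ((n : ℕ) : ZMod m) = y))) := by
    intro x _ y _ hxy
    rw [Finset.disjoint_left]
    rintro p hp hq
    simp only [Finset.mem_product, Finset.mem_filter] at hp hq
    exact hxy (by rw [← hp.1.2, hq.1.2])
  have hsum : ∑ x : ZMod m, (a x) ^ 2 = S.card := by
    rw [hSeq, Finset.card_biUnion hdisj]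
    refine Finset.sum_congr rfl fun x _ => ?_
    rw [Finset.card_product, ha x, sq]
  -- Step 2: split S
  set D := S.filter (fun p => p.1 = p.2) with hDdef
  set T := S.filter (fun p => p.2 < p.1) with hTdef
  set T' := S.filter (fun p => p.1 < p.2) with hT'def
  have hcardsplit : S.card = D.card + T.card + T'.card := by
    have h1 : D.card + (S.filter (fun p => ¬ p.1 = p.2)).card = S.card :=
      Finset.card_filter_add_card_filter_not _
    have h2 : ((S.filter (fun p => ¬ p.1 = p.2)).filter (fun p => p.2 < p.1)).card +
        ((S.filter (fun p => ¬ p.1 = p.2)).filter (fun p => ¬ p.2 < p.1)).card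
        = (S.filter (fun p => ¬ p.1 = p.2)).card :=
      Finset.card_filter_add_card_filter_not _
    have e1 : (S.filter (fun p => ¬ p.1 = p.2)).filter (fun p => p.2 < p.1) = T := by
      rw [hTdef, Finset.filter_filter]
      exact Finset.filter_congr (fun p _ => by omega)
    have e2 : (S.filter (fun p => ¬ p.1 = p.2)).filter (fun p => ¬ p.2 < p.1) = T' := by
      rw [hT'def, Finset.filter_filter]
      exact Finset.filter_congr (fun p _ => by omega)
    rw [e1, e2] at h2
    omega
  -- D.card = k
  have hD : D.card = k := by
    rw [← hk]
    apply Finset.card_nbij (fun p => p.1)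
    · rintro ⟨u, v⟩ hp
      simp only [Finset.mem_coe, hDdef, hSdef, Finset.mem_filter, Finset.mem_product] at hp
      exact hp.1.1.1
    · rintro ⟨u, v⟩ hp ⟨u', v'⟩ hq h
      simp only [hDdef, hSdef, Finset.coe_filter, Set.mem_setOf_eq] at hp hq
      simp only at h
      obtain ⟨_, h1⟩ := hp; obtain ⟨_, h2⟩ := hq
      simp [Prod.ext_iff, h, h1 ▸ h, ← h1, ← h2, h]
    · intro u hu
      refine ⟨(u, u), ?_, rfl⟩
      simp [hDdef, hSdef, Finset.mem_coe.mp hu]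
  -- T'.card = T.card
  have hTT' : T'.card = T.card := by
    apply Finset.card_nbij (fun p => (p.2, p.1))
    · rintro ⟨u, v⟩ hp
      simp only [Finset.mem_coe, hT'def, hTdef, hSdef, Finset.mem_filter, Finset.mem_product] at hp ⊢
      exact ⟨⟨⟨hp.1.1.2, hp.1.1.1⟩, hp.1.2.symm⟩, hp.2⟩
    · rintro ⟨u, v⟩ _ ⟨u', v'⟩ _ h
      simpa [Prod.ext_iff, and_comm] using h
    · rintro ⟨u, v⟩ hu
      refine ⟨(v, u), ?_, rfl⟩
      simp only [Finset.mem_coe, hTdef, hT'def, hSdef, Finset.mem_filter,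
        Finset.mem_product] at hu ⊢
      exact ⟨⟨⟨hu.1.1.2, hu.1.1.1⟩, hu.1.2.symm⟩, hu.2⟩
  -- T.card ≤ N / m
  have hT : T.card ≤ N / m := by
    have : T.card ≤ (Finset.Icc 1 (N / m)).card := by
      apply Finset.card_le_card_of_injOn (fun p => (p.1 - p.2) / m)
      · rintro ⟨u, v⟩ hp
        simp only [Finset.mem_coe, hTdef, hSdef, Finset.mem_filter, Finset.mem_product] at hp
        obtain ⟨⟨⟨hu, hv⟩, hmod⟩, hlt⟩ := hp
        have huN := hA hu; have hvN := hA hv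
        simp only [Finset.mem_Icc] at huN hvN
        have hdvd : m ∣ u - v := by
          have := (ZMod.natCast_eq_natCast_iff v u m).mp hmod.symm
          exact (Nat.modEq_iff_dvd' (le_of_lt hlt)).mp this
        rw [Finset.mem_coe, Finset.mem_Icc]
        constructor
        · rw [Nat.one_le_div_iff hm]
          exact Nat.le_of_dvd (by omega) hdvd
        · exact Nat.div_le_div_right (by omega)
      · rintro ⟨u, v⟩ hp ⟨u', v'⟩ hq h
        simp only [hTdef, hSdef, Finset.coe_filter, Finset.mem_filter, Finset.mem_product,
          Set.mem_setOf_eq] at hp hq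
        obtain ⟨⟨⟨hu, hv⟩, hmod⟩, hlt⟩ := hp
        obtain ⟨⟨⟨hu', hv'⟩, hmod'⟩, hlt'⟩ := hq
        have hdvd : m ∣ u - v := (Nat.modEq_iff_dvd' (le_of_lt hlt)).mp
          ((ZMod.natCast_eq_natCast_iff v u m).mp hmod.symm)
        have hdvd' : m ∣ u' - v' := (Nat.modEq_iff_dvd' (le_of_lt hlt')).mp
          ((ZMod.natCast_eq_natCast_iff v' u' m).mp hmod'.symm)
        simp only at h
        have hdeq : u - v = u' - v' := by
          rw [← Nat.mul_div_cancel' hdvd, ← Nat.mul_div_cancel' hdvd', h]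
        have := b2_diffs A hB2 hu hv hu' hv' hlt hlt' (by omega)
        simp [Prod.ext_iff, this.1, this.2]
    simpa using this
  -- combine
  have hnat : ∑ x : ZMod m, (a x) ^ 2 ≤ k + 2 * (N / m) := by
    rw [hsum, hcardsplit]; omega
  have hcast : ((N / m : ℕ) : ℝ) ≤ (N : ℝ) / m := Nat.cast_div_le
  calc (∑ x : ZMod m, (a x : ℝ) ^ 2) = ((∑ x : ZMod m, (a x) ^ 2 : ℕ) : ℝ) := by
        push_cast; ring
    _ ≤ ((k + 2 * (N / m) : ℕ) : ℝ) := by exact_mod_cast hnat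
    _ ≤ k + 2 * N / m := by
        push_cast
        rw [mul_div_assoc]
        linarith
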